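/- arXiv:1512.03294 — 2 statements merged into one kernel-verified Lean document; each statement's English description precedes it below -/
import Mathlib

section
/- Let (X,T) be a topological dynamical system (X a compact metric space with metric d, T : X → X continuous). Suppose (X,T) is mean sensitive and there exists a pair (q,p) ∈ X × X which is mean proximal, where q is a transitive point and p is a periodic point. Then there exist η > 0 and a subset K ⊂ X which is a union of countably many Cantor sets such that K is a mean Li-Yorke set with modulus η; in particular, (X,T) is mean Li-Yorke chaotic. -/
open Filter Metric Set

/-- Birkhoff average of the distance between the orbits of `x` and `y`. -/
noncomputable def birkhoffAvg {X : Type*} [PseudoMetricSpace X]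
    (T : X → X) (x y : X) (N : ℕ) : ℝ :=
  (∑ k ∈ Finset.range N, dist (T^[k] x) (T^[k] y)) / N

/-- A pair `(x,y)` is mean proximal if
`liminf_{N→∞} (1/N) ∑_{k<N} d(T^k x, T^k y) = 0`. -/
def MeanProximalPair {X : Type*} [PseudoMetricSpace X] (T : X → X) (x y : X) : Prop :=
  liminf (birkhoffAvg T x y) atTop = 0

/-- `(X,T)` is mean sensitive. -/
def MeanSensitive {X : Type*} [PseudoMetricSpace X] (T : X → X) : Prop :=
  ∃ δ > (0 : ℝ), ∀ x : X, ∀ ε > (0 : ℝ), ∃ y ∈ ball x ε,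
    δ < limsup (birkhoffAvg T x y) atTop

/-- `K` is a mean Li-Yorke set with modulus `η`: every pair of distinct points of `K`
is mean proximal and has upper Birkhoff distance average at least `η`. -/
def MeanLiYorkeSetMod {X : Type*} [PseudoMetricSpace X]
    (T : X → X) (η : ℝ) (K : Set X) : Prop :=
  ∀ x ∈ K, ∀ y ∈ K, x ≠ y →
    MeanProximalPair T x y ∧ η ≤ limsup (birkhoffAvg T x y) atTop

/-- A Cantor set: a nonempty compact perfect totally disconnected subset. -/
def IsCantorSet {X : Type*} [MetricSpace X] (C : Set X) : Prop :=
  C.Nonempty ∧ IsCompact C ∧ Perfect C ∧ IsTotallyDisconnected C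

section aux
variable {X : Type*} [MetricSpace X] {T : X → X}

lemma birkhoffAvg_nonneg (T : X → X) (x y : X) (N : ℕ) : 0 ≤ birkhoffAvg T x y N := by
  unfold birkhoffAvg
  apply div_nonneg _ (by positivity)
  exact Finset.sum_nonneg fun k _ => dist_nonneg

lemma birkhoffAvg_comm (T : X → X) (x y : X) (N : ℕ) :
    birkhoffAvg T x y N = birkhoffAvg T y x N := by
  unfold birkhoffAvg
  simp [dist_comm]

lemma birkhoffAvg_triangle (T : X → X) (x y z : X) (N : ℕ) :
    birkhoffAvg T x z N ≤ birkhoffAvg T x y N + birkhoffAvg T y z N := by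
  unfold birkhoffAvg
  rw [← add_div]
  rcases Nat.eq_zero_or_pos N with h | h
  · simp [h]
  · apply div_le_div_of_nonneg_right ?_ (by positivity)
    · rw [← Finset.sum_add_distrib]
      exact Finset.sum_le_sum fun k _ => dist_triangle _ _ _

lemma birkhoffAvg_continuous (hT : Continuous T) (N : ℕ) :
    Continuous (fun z : X × X => birkhoffAvg T z.1 z.2 N) := by
  unfold birkhoffAvg
  apply Continuous.div_const
  exact continuous_finset_sum _ fun k _ =>
    ((hT.iterate k).comp continuous_fst).dist ((hT.iterate k).comp continuous_snd)

lemma birkhoffAvg_le_diam [CompactSpace X] (T : X → X) (x y : X) (N : ℕ) :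
    birkhoffAvg T x y N ≤ diam (univ : Set X) := by
  unfold birkhoffAvg
  rcases Nat.eq_zero_or_pos N with h | h
  · simp [h, diam_nonneg]
  · rw [div_le_iff₀ (by positivity)]
    calc ∑ k ∈ Finset.range N, dist (T^[k] x) (T^[k] y)
        ≤ ∑ _k ∈ Finset.range N, diam (univ : Set X) :=
          Finset.sum_le_sum fun k _ => dist_le_diam_of_mem isCompact_univ.isBounded
            (mem_univ _) (mem_univ _)
      _ = diam (univ : Set X) * N := by simp [mul_comm]

lemma freq_of_lt_limsup [CompactSpace X] {x y : X} {b : ℝ}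
    (h : b < limsup (birkhoffAvg T x y) atTop) :
    ∀ m : ℕ, ∃ N, m ≤ N ∧ b < birkhoffAvg T x y N := by
  have hco : IsCoboundedUnder (· ≤ ·) atTop (birkhoffAvg T x y) :=
    IsBoundedUnder.isCoboundedUnder_le (isBoundedUnder_of ⟨0, fun N => birkhoffAvg_nonneg T x y N⟩)
  have := frequently_lt_of_lt_limsup hco h
  intro m
  rcases (frequently_atTop.1 this) m with ⟨N, hN, hb⟩
  exact ⟨N, hN, hb⟩

lemma freq_of_liminf_lt [CompactSpace X] {x y : X} {b : ℝ}
    (h : liminf (birkhoffAvg T x y) atTop < b) :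
    ∀ m : ℕ, ∃ N, m ≤ N ∧ birkhoffAvg T x y N < b := by
  have hco : IsCoboundedUnder (· ≥ ·) atTop (birkhoffAvg T x y) :=
    IsBoundedUnder.isCoboundedUnder_ge (isBoundedUnder_of ⟨diam (univ : Set X), fun N => birkhoffAvg_le_diam T x y N⟩)
  have := frequently_lt_of_liminf_lt hco h
  intro m
  rcases (frequently_atTop.1 this) m with ⟨N, hN, hb⟩
  exact ⟨N, hN, hb⟩

lemma le_limsup_of_freq [CompactSpace X] {x y : X} {b : ℝ}
    (h : ∀ m : ℕ, ∃ N, m ≤ N ∧ b ≤ birkhoffAvg T x y N) :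
    b ≤ limsup (birkhoffAvg T x y) atTop := by
  apply le_limsup_of_frequently_le
  · exact frequently_atTop.2 fun m => (h m).imp fun N hN => ⟨hN.1, hN.2⟩
  · exact isBoundedUnder_of ⟨diam (univ : Set X), fun N => birkhoffAvg_le_diam T x y N⟩

lemma liminf_eq_zero_of_freq [CompactSpace X] {x y : X}
    (h : ∀ m : ℕ, ∃ N, m ≤ N ∧ birkhoffAvg T x y N < ((m : ℝ) + 1)⁻¹) :
    liminf (birkhoffAvg T x y) atTop = 0 := by
  have hge : 0 ≤ liminf (birkhoffAvg T x y) atTop := by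
    apply le_liminf_of_le
    · exact IsBoundedUnder.isCoboundedUnder_ge (isBoundedUnder_of ⟨diam (univ : Set X), fun N => birkhoffAvg_le_diam T x y N⟩)
    · exact Eventually.of_forall fun N => birkhoffAvg_nonneg T x y N
  have hle : ∀ ε : ℝ, 0 < ε → liminf (birkhoffAvg T x y) atTop ≤ ε := by
    intro ε hε
    obtain ⟨m, hm⟩ := exists_nat_gt ε⁻¹
    obtain ⟨N, _, hN⟩ := h m
    apply liminf_le_of_frequently_le
    · apply frequently_atTop.2
      intro m'
      obtain ⟨N', hN'1, hN'2⟩ := h (max m m')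
      refine ⟨N', le_trans (le_max_right _ _) hN'1, le_trans (le_of_lt hN'2) ?_⟩
      rw [inv_le_comm₀ (by positivity) hε]
      calc ε⁻¹ ≤ m := le_of_lt hm
        _ ≤ (max m m' : ℕ) := by exact_mod_cast Nat.le_max_left m m'
        _ ≤ (max m m' : ℕ) + 1 := by linarith
    · exact isBoundedUnder_of ⟨0, fun N => birkhoffAvg_nonneg T x y N⟩
  by_contra hne
  have h1 : 0 < liminf (birkhoffAvg T x y) atTop := lt_of_le_of_ne hge (Ne.symm hne)
  have := hle _ (half_pos h1)
  linarith

lemma stabilize_mem_open {O : Set (X × X)} (hO : IsOpen O) {a b : X} (h : (a, b) ∈ O) :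
    ∃ r > 0, ∀ a' ∈ closedBall a r, ∀ b' ∈ closedBall b r, (a', b') ∈ O := by
  obtain ⟨ε, hε, hball⟩ := Metric.isOpen_iff.1 hO _ h
  refine ⟨ε / 2, by positivity, fun a' ha' b' hb' => hball ?_⟩
  rw [mem_ball, Prod.dist_eq]
  simp only [mem_closedBall] at ha' hb'
  exact lt_of_le_of_lt (max_le ha' hb') (by linarith)

lemma uncountable_seq : ¬ Countable (ℕ → Bool) := by
  intro h
  obtain ⟨f, hf⟩ := exists_surjective_nat (ℕ → Bool)
  obtain ⟨k, hk⟩ := hf (fun n => !(f n n))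
  have := congrFun hk k
  simp at this

end aux
open Filter Metric Set



section aux
variable {X : Type*} [MetricSpace X] {T : X → X}

lemma iterate_periodic {p : X} {t : ℕ} (htp : T^[t] p = p) (n : ℕ) : T^[t*n] p = p := by
  induction n with
  | zero => simp
  | succ n ih =>
    have : t * (n+1) = t * n + t := by ring
    rw [this, Function.iterate_add_apply, htp, ih]

lemma iterate_mod {p : X} {t : ℕ} (ht : 1 ≤ t) (htp : T^[t] p = p) (j : ℕ) :
    T^[j] p = T^[j % t] p := by
  conv_lhs => rw [← Nat.mod_add_div j t]
  rw [Function.iterate_add_apply, iterate_periodic htp]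

lemma merge_lemma {q p : X} {t : ℕ} (ht : 1 ≤ t) (htp : T^[t] p = p)
    (hfreq : ∀ ε : ℝ, 0 < ε → ∀ m : ℕ, ∃ M, m ≤ M ∧ birkhoffAvg T q p M < ε)
    {α β : ℕ} (hαβ : α % t = β % t) {ε : ℝ} (hε : 0 < ε) (m : ℕ) :
    ∃ N, m ≤ N ∧ birkhoffAvg T (T^[α] q) (T^[β] q) N < ε := by
  set u : ℕ → ℝ := fun k => dist (T^[k] q) (T^[k] p) with hu
  set S : ℕ → ℝ := fun M => ∑ k ∈ Finset.range M, u k with hS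
  have hSnn : ∀ M, 0 ≤ S M := fun M => Finset.sum_nonneg fun k _ => dist_nonneg
  have hSmono : ∀ {M M' : ℕ}, M ≤ M' → S M ≤ S M' := by
    intro M M' h
    apply Finset.sum_le_sum_of_subset_of_nonneg (Finset.range_subset_range.2 h)
    intro k _ _; exact dist_nonneg
  set B := max α β with hB
  obtain ⟨M, hM1, hM2⟩ := hfreq (ε/4) (by positivity) (m + B + 2*B + 1)
  have hBM : 2*B ≤ M := by omega
  set N := M - B with hN
  have hNB : N + B = M := by omega
  have hmN : m + 1 ≤ N := by omega
  have hNpos : 0 < N := by omega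
  refine ⟨N, by omega, ?_⟩
  have hSM : S M < (ε/4) * M := by
    have : birkhoffAvg T q p M = S M / M := rfl
    rw [this] at hM2
    have hMpos : (0:ℝ) < M := by exact_mod_cast Nat.pos_of_ne_zero (by omega)
    calc S M = (S M / M) * M := by field_simp
      _ < (ε/4) * M := by apply mul_lt_mul_of_pos_right hM2 hMpos
  -- pointwise bound
  have hpt : ∀ k : ℕ, dist (T^[k] (T^[α] q)) (T^[k] (T^[β] q)) ≤ u (α + k) + u (β + k) := by
    intro k
    have h1 : T^[k] (T^[α] q) = T^[α + k] q := by
      rw [Nat.add_comm, Function.iterate_add_apply]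
    have h2 : T^[k] (T^[β] q) = T^[β + k] q := by
      rw [Nat.add_comm, Function.iterate_add_apply]
    have h3 : T^[α + k] p = T^[β + k] p := by
      rw [iterate_mod ht htp (α + k), iterate_mod ht htp (β + k)]
      congr 1
      rw [Nat.add_mod, Nat.add_mod β, hαβ]
    rw [h1, h2]
    have h4 : dist (T^[α+k] p) (T^[β+k] q) = u (β + k) := by
      rw [h3, dist_comm]
    calc dist (T^[α+k] q) (T^[β+k] q)
        ≤ dist (T^[α+k] q) (T^[α+k] p) + dist (T^[α+k] p) (T^[β+k] q) := dist_triangle _ _ _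
      _ = u (α+k) + u (β+k) := by rw [h4]
  have hsum : ∑ k ∈ Finset.range N, dist (T^[k] (T^[α] q)) (T^[k] (T^[β] q))
      ≤ S (α + N) + S (β + N) := by
    calc ∑ k ∈ Finset.range N, dist (T^[k] (T^[α] q)) (T^[k] (T^[β] q))
        ≤ ∑ k ∈ Finset.range N, (u (α + k) + u (β + k)) :=
          Finset.sum_le_sum fun k _ => hpt k
      _ = (∑ k ∈ Finset.range N, u (α + k)) + ∑ k ∈ Finset.range N, u (β + k) :=
          Finset.sum_add_distrib
      _ ≤ S (α + N) + S (β + N) := by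
          have e1 : S (α + N) = S α + ∑ k ∈ Finset.range N, u (α + k) := Finset.sum_range_add u α N
          have e2 : S (β + N) = S β + ∑ k ∈ Finset.range N, u (β + k) := Finset.sum_range_add u β N
          have := hSnn α; have := hSnn β
          linarith
  have hαN : α + N ≤ M := by omega
  have hβN : β + N ≤ M := by omega
  have hM2N : (M:ℝ) ≤ 2 * N := by
    have : M ≤ 2 * N := by omega
    exact_mod_cast this
  have hNr : (0:ℝ) < N := by exact_mod_cast hNpos
  have : birkhoffAvg T (T^[α] q) (T^[β] q) N
      = (∑ k ∈ Finset.range N, dist (T^[k] (T^[α] q)) (T^[k] (T^[β] q))) / N := rfl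
  rw [this, div_lt_iff₀ hNr]
  calc (∑ k ∈ Finset.range N, dist (T^[k] (T^[α] q)) (T^[k] (T^[β] q)))
      ≤ S (α + N) + S (β + N) := hsum
    _ ≤ 2 * S M := by
        have := hSmono hαN; have := hSmono hβN; linarith
    _ < 2 * ((ε/4) * M) := by linarith
    _ ≤ ε * N := by
        have : 2 * ((ε/4) * M) = (ε/2) * M := by ring
        rw [this]
        calc (ε/2) * M ≤ (ε/2) * (2*N) := by
              apply mul_le_mul_of_nonneg_left hM2N (by positivity)
          _ = ε * N := by ring
end aux
section construction
open Filter Metric Set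
variable {X : Type*} [MetricSpace X] [CompactSpace X]

/-- extension of a finite word to an infinite one. -/
def extFn {n : ℕ} (v : Fin n → Bool) : ℕ → Bool := fun j => if h : j < n then v ⟨j, h⟩ else false

lemma birkhoffAvg_self (T : X → X) (x : X) (N : ℕ) : birkhoffAvg T x x N = 0 := by
  unfold birkhoffAvg; simp

/-- A good configuration at stage `m`. -/
def GoodCfg (D : Set X) (x₀ : X) (r₀ : ℝ) (m : ℕ) (c : (ℕ → Bool) → X) (ρ : ℝ) : Prop :=
  0 < ρ ∧
  (∀ σ τ : ℕ → Bool, (∀ j, j < m → σ j = τ j) → c σ = c τ) ∧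
  (∀ σ, c σ ∈ D) ∧
  (∀ σ, closedBall (c σ) ρ ⊆ ball x₀ r₀) ∧
  (∀ σ τ : ℕ → Bool, (∃ j, j < m ∧ σ j ≠ τ j) →
    Disjoint (closedBall (c σ) ρ) (closedBall (c τ) ρ))

/-- What one step of the construction achieves. -/
def StepConcl (T : X → X) (δ : ℝ) (m : ℕ)
    (c : (ℕ → Bool) → X) (ρ : ℝ) (c' : (ℕ → Bool) → X) (ρ' : ℝ) : Prop :=
  (∀ σ, dist (c' σ) (c σ) + ρ' ≤ ρ) ∧ ρ' ≤ ρ / 2 ∧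
  ∀ σ τ : ℕ → Bool, (∃ j, j < m + 1 ∧ σ j ≠ τ j) →
    (∃ N, m ≤ N ∧ ∀ a ∈ closedBall (c' σ) ρ', ∀ b ∈ closedBall (c' τ) ρ',
        δ / 2 < birkhoffAvg T a b N) ∧
    (∃ N, m ≤ N ∧ ∀ a ∈ closedBall (c' σ) ρ', ∀ b ∈ closedBall (c' τ) ρ',
        birkhoffAvg T a b N < ((m : ℝ) + 1)⁻¹)

variable {T : X → X} {D : Set X} {x₀ : X} {r₀ δ : ℝ}

lemma sweep (hT : Continuous T) (hδ : 0 < δ)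
    (hsens : ∀ x : X, ∀ ε : ℝ, 0 < ε → ∃ y, dist y x < ε ∧
      ∀ m : ℕ, ∃ N, m ≤ N ∧ δ < birkhoffAvg T x y N)
    (hball : ball x₀ r₀ ⊆ closure D)
    {m : ℕ} {c : (ℕ → Bool) → X} {ρ : ℝ} (hg : GoodCfg D x₀ r₀ m c ρ)
    (L : List ((Fin (m+1) → Bool) × (Fin (m+1) → Bool))) :
    ∃ (c' : (ℕ → Bool) → X) (ρ' : ℝ), 0 < ρ' ∧
      (∀ σ τ : ℕ → Bool, (∀ j, j < m + 1 → σ j = τ j) → c' σ = c' τ) ∧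
      (∀ σ, c' σ ∈ D) ∧
      (∀ σ, dist (c' σ) (c σ) + ρ' ≤ ρ) ∧
      (∀ uv ∈ L, uv.1 ≠ uv.2 →
        ∃ N, m ≤ N ∧ ∀ a ∈ closedBall (c' (extFn uv.1)) ρ',
          ∀ b ∈ closedBall (c' (extFn uv.2)) ρ',
          δ / 2 < birkhoffAvg T a b N) := by
  classical
  obtain ⟨hρ, hcls, hD, hbl, _⟩ := hg
  induction L with
  | nil =>
    refine ⟨c, ρ, hρ, fun σ τ h => hcls σ τ (fun j hj => h j (by omega)), hD,
      fun σ => by simp [dist_self, le_refl], by simp⟩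
  | cons uv L ih =>
    obtain ⟨c₁, ρ₁, hρ₁, hcls₁, hD₁, hnest₁, hsep₁⟩ := ih
    by_cases huv : uv.1 = uv.2
    · refine ⟨c₁, ρ₁, hρ₁, hcls₁, hD₁, hnest₁, ?_⟩
      intro w hw hne
      rcases List.mem_cons.1 hw with h | h
      · exact absurd (h ▸ huv) hne
      · exact hsep₁ w h hne
    -- the interesting case
    set σu : ℕ → Bool := extFn uv.1 with hσu
    set σv : ℕ → Bool := extFn uv.2 with hσv
    set xu : X := c₁ σu with hxu
    set xv : X := c₁ σv with hxv
    have hballsub : ∀ σ : ℕ → Bool, closedBall (c₁ σ) ρ₁ ⊆ ball x₀ r₀ := by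
      intro σ z hz
      apply hbl σ
      rw [mem_closedBall] at hz ⊢
      have h1 := hnest₁ σ
      have h2 := dist_triangle z (c₁ σ) (c σ)
      have h3 := dist_nonneg (x := c₁ σ) (y := c σ)
      linarith [dist_triangle z (c₁ σ) (c σ)]
    obtain ⟨y, hy, hyfreq⟩ := hsens xu (ρ₁ / 2) (by positivity)
    obtain ⟨N, hNm, hNδ⟩ := hyfreq m
    -- find a point of D near y with large average from xu
    have hycl : y ∈ closure D := by
      apply hball
      apply hballsub σu
      rw [mem_closedBall]
      linarith [hy]
    have hOopen : IsOpen ({z : X | δ < birkhoffAvg T xu z N} ∩ ball xu (3 * ρ₁ / 4)) := by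
      apply IsOpen.inter _ isOpen_ball
      have hc : Continuous fun z : X => birkhoffAvg T xu z N :=
        (birkhoffAvg_continuous hT N).comp (continuous_const.prodMk continuous_id)
      exact isOpen_lt continuous_const hc
    have hyO : y ∈ ({z : X | δ < birkhoffAvg T xu z N} ∩ ball xu (3 * ρ₁ / 4)) := by
      constructor
      · exact hNδ
      · rw [mem_ball]; linarith [hy]
    obtain ⟨z, hzO, hzD⟩ := (_root_.mem_closure_iff.1 hycl) _ hOopen hyO
    obtain ⟨hzavg, hzball⟩ := hzO
    rw [mem_ball] at hzball
    -- triangle trick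
    have hcase : δ / 2 < birkhoffAvg T xu xv N ∨ δ / 2 < birkhoffAvg T xv z N := by
      by_contra hcon
      push_neg at hcon
      have := birkhoffAvg_triangle T xu xv z N
      simp only [mem_setOf_eq] at hzavg
      linarith [hcon.1, hcon.2, hzavg]
    obtain ⟨a₀, ha₀D, ha₀dist, ha₀avg⟩ :
        ∃ a₀ : X, a₀ ∈ D ∧ dist a₀ xu ≤ 3 * ρ₁ / 4 ∧ δ / 2 < birkhoffAvg T a₀ xv N := by
      rcases hcase with h | h
      · exact ⟨xu, hD₁ σu, by simp [dist_self]; positivity, h⟩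
      · exact ⟨z, hzD, le_of_lt hzball, by rw [birkhoffAvg_comm]; exact h⟩
    -- stabilize
    obtain ⟨r', hr', hstab⟩ := stabilize_mem_open
      (O := {w : X × X | δ / 2 < birkhoffAvg T w.1 w.2 N})
      (isOpen_lt continuous_const (birkhoffAvg_continuous hT N)) ha₀avg
    -- new configuration
    set c₂ : (ℕ → Bool) → X :=
      fun σ => if (fun j : Fin (m+1) => σ j) = uv.1 then a₀ else c₁ σ with hc₂
    set ρ₂ : ℝ := min r' (ρ₁ / 4) with hρ₂
    have hρ₂pos : 0 < ρ₂ := lt_min hr' (by positivity)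
    have hρ₂r' : ρ₂ ≤ r' := min_le_left _ _
    have hρ₂ρ₁ : ρ₂ ≤ ρ₁ / 4 := min_le_right _ _
    have hresu : (fun j : Fin (m+1) => σu j) = uv.1 := by
      funext j
      simp [hσu, extFn, j.isLt]
    have hresv : (fun j : Fin (m+1) => σv j) = uv.2 := by
      funext j
      simp [hσv, extFn, j.isLt]
    have hc₂u : c₂ σu = a₀ := by rw [hc₂]; simp [hresu]
    have hc₂v : c₂ σv = xv := by
      rw [hc₂]; simp only [hresv]
      rw [if_neg (fun h => huv h.symm)]
    have hcls₂ : ∀ σ τ : ℕ → Bool, (∀ j, j < m + 1 → σ j = τ j) → c₂ σ = c₂ τ := by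
      intro σ τ h
      have he : (fun j : Fin (m+1) => σ j) = (fun j : Fin (m+1) => τ j) := by
        funext j; exact h j j.isLt
      rw [hc₂]
      simp only [he]
      by_cases hb : (fun j : Fin (m+1) => τ j) = uv.1
      · simp [hb]
      · simp only [if_neg hb]
        exact hcls₁ σ τ h
    have hhop : ∀ σ, dist (c₂ σ) (c₁ σ) + ρ₂ ≤ ρ₁ := by
      intro σ
      by_cases hb : (fun j : Fin (m+1) => σ j) = uv.1
      · have hcs : c₂ σ = a₀ := by rw [hc₂]; simp [hb]
        have hcs1 : c₁ σ = xu := by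
          apply hcls₁
          intro j hj
          have := congrFun hb ⟨j, hj⟩
          simp at this
          rw [this, hσu, extFn]
          simp [hj]
        rw [hcs, hcs1]
        linarith
      · have hcs : c₂ σ = c₁ σ := by rw [hc₂]; simp [hb]
        rw [hcs, dist_self]
        linarith
    have hsub₂ : ∀ σ, closedBall (c₂ σ) ρ₂ ⊆ closedBall (c₁ σ) ρ₁ := by
      intro σ w hw
      rw [mem_closedBall] at hw ⊢
      have := hhop σ
      linarith [dist_triangle w (c₂ σ) (c₁ σ)]
    refine ⟨c₂, ρ₂, hρ₂pos, hcls₂, ?_, ?_, ?_⟩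
    · intro σ
      rw [hc₂]
      by_cases hb : (fun j : Fin (m+1) => σ j) = uv.1
      · simp [hb, ha₀D]
      · simp [hb, hD₁ σ]
    · intro σ
      have h1 := hhop σ
      have h2 := hnest₁ σ
      have := dist_triangle (c₂ σ) (c₁ σ) (c σ)
      linarith
    · intro w hw hne
      rcases List.mem_cons.1 hw with h | h
      · subst h
        refine ⟨N, hNm, ?_⟩
        intro a ha b hb
        have ha' : a ∈ closedBall a₀ r' := by
          have : c₂ (extFn w.1) = a₀ := hc₂u
          rw [← hσu] at ha
          rw [this] at ha
          exact closedBall_subset_closedBall hρ₂r' ha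
        have hb' : b ∈ closedBall xv r' := by
          rw [← hσv, hc₂v] at hb
          exact closedBall_subset_closedBall hρ₂r' hb
        exact hstab a ha' b hb'
      · obtain ⟨N', hN'm, hN'⟩ := hsep₁ w h hne
        refine ⟨N', hN'm, ?_⟩
        intro a ha b hb
        exact hN' a (hsub₂ _ ha) b (hsub₂ _ hb)
end construction
section stepsec
open Filter Metric Set
variable {X : Type*} [MetricSpace X] [CompactSpace X]
variable {T : X → X} {D : Set X} {x₀ : X} {r₀ δ : ℝ}

lemma step_lemma (hT : Continuous T) (hδ : 0 < δ)
    (hsens : ∀ x : X, ∀ ε : ℝ, 0 < ε → ∃ y, dist y x < ε ∧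
      ∀ m : ℕ, ∃ N, m ≤ N ∧ δ < birkhoffAvg T x y N)
    (hmerge : ∀ z₁ ∈ D, ∀ z₂ ∈ D, ∀ ε : ℝ, 0 < ε → ∀ m : ℕ,
      ∃ N, m ≤ N ∧ birkhoffAvg T z₁ z₂ N < ε)
    (hball : ball x₀ r₀ ⊆ closure D)
    {m : ℕ} {c : (ℕ → Bool) → X} {ρ : ℝ} (hg : GoodCfg D x₀ r₀ m c ρ) :
    ∃ (c' : (ℕ → Bool) → X) (ρ' : ℝ),
      GoodCfg D x₀ r₀ (m+1) c' ρ' ∧ StepConcl T δ m c ρ c' ρ' := by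
  classical
  set L := (Finset.univ : Finset ((Fin (m+1) → Bool) × (Fin (m+1) → Bool))).toList with hL
  obtain ⟨c₁, ρ₁, hρ₁, hcls₁, hD₁, hnest₁, hsep₁⟩ := sweep hT hδ hsens hball hg L
  have hmemL : ∀ w : (Fin (m+1) → Bool) × (Fin (m+1) → Bool), w ∈ L :=
    fun w => Finset.mem_toList.2 (Finset.mem_univ w)
  -- restriction helper
  have hrest : ∀ σ : ℕ → Bool, c₁ (extFn (fun j : Fin (m+1) => σ j)) = c₁ σ := by
    intro σ
    apply hcls₁
    intro j hj
    simp [extFn, hj]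
  -- separation for arbitrary sequences
  have hSEP : ∀ σ τ : ℕ → Bool, (∃ j, j < m + 1 ∧ σ j ≠ τ j) →
      ∃ N, m ≤ N ∧ ∀ a ∈ closedBall (c₁ σ) ρ₁, ∀ b ∈ closedBall (c₁ τ) ρ₁,
        δ / 2 < birkhoffAvg T a b N := by
    intro σ τ ⟨j, hj, hne⟩
    have hune : (fun i : Fin (m+1) => σ i) ≠ (fun i : Fin (m+1) => τ i) := by
      intro h
      exact hne (congrFun h ⟨j, hj⟩)
    obtain ⟨N, hNm, hN⟩ := hsep₁ ((fun i : Fin (m+1) => σ i), (fun i : Fin (m+1) => τ i))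
      (hmemL _) hune
    refine ⟨N, hNm, ?_⟩
    rw [hrest σ, hrest τ] at hN
    exact hN
  -- distinct centers
  have hcd : ∀ σ τ : ℕ → Bool, (∃ j, j < m + 1 ∧ σ j ≠ τ j) → c₁ σ ≠ c₁ τ := by
    intro σ τ hd heq
    obtain ⟨N, _, hN⟩ := hSEP σ τ hd
    have h1 := hN (c₁ σ) (mem_closedBall_self hρ₁.le) (c₁ τ) (mem_closedBall_self hρ₁.le)
    rw [heq, birkhoffAvg_self] at h1
    linarith
  -- merge radii via choice
  have hM : ∀ w : (Fin (m+1) → Bool) × (Fin (m+1) → Bool), ∃ r, 0 < r ∧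
      (w.1 ≠ w.2 → ∃ N, m ≤ N ∧ ∀ a ∈ closedBall (c₁ (extFn w.1)) r,
        ∀ b ∈ closedBall (c₁ (extFn w.2)) r,
        birkhoffAvg T a b N < ((m : ℝ) + 1)⁻¹) := by
    intro w
    by_cases hw : w.1 = w.2
    · exact ⟨1, one_pos, fun h => absurd hw h⟩
    · have hinvpos : (0:ℝ) < ((m : ℝ) + 1)⁻¹ := by positivity
      obtain ⟨N, hNm, hN⟩ := hmerge (c₁ (extFn w.1)) (hD₁ _) (c₁ (extFn w.2)) (hD₁ _)
        (((m : ℝ) + 1)⁻¹) hinvpos m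
      obtain ⟨r, hr, hstab⟩ := stabilize_mem_open
        (O := {v : X × X | birkhoffAvg T v.1 v.2 N < ((m : ℝ) + 1)⁻¹})
        (isOpen_lt (birkhoffAvg_continuous hT N) continuous_const) hN
      exact ⟨r, hr, fun _ => ⟨N, hNm, fun a ha b hb => hstab a ha b hb⟩⟩
  choose rf hrf0 hrf1 using hM
  -- minimal distance between centers
  set G : ((Fin (m+1) → Bool) × (Fin (m+1) → Bool)) → ℝ :=
    fun w => if w.1 = w.2 then 1 else dist (c₁ (extFn w.1)) (c₁ (extFn w.2)) with hG
  have hGpos : ∀ w, 0 < G w := by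
    intro w
    rw [hG]
    by_cases hw : w.1 = w.2
    · simp [hw]
    · simp only [if_neg hw]
      rw [dist_pos]
      apply hcd
      obtain ⟨j, hj⟩ := Function.ne_iff.1 hw
      exact ⟨j.val, j.isLt, by simpa [extFn, j.isLt] using hj⟩
  have hne : (Finset.univ : Finset ((Fin (m+1) → Bool) × (Fin (m+1) → Bool))).Nonempty :=
    Finset.univ_nonempty
  set dmin := Finset.univ.inf' hne G with hdmin
  have hdminpos : 0 < dmin := (Finset.lt_inf'_iff hne).2 fun w _ => hGpos w
  set rmin := Finset.univ.inf' hne rf with hrmin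
  have hrminpos : 0 < rmin := (Finset.lt_inf'_iff hne).2 fun w _ => hrf0 w
  set ρ' := min (min (ρ / 2) ρ₁) (min (dmin / 3) rmin) with hρ'
  have hρ'pos : 0 < ρ' :=
    lt_min (lt_min (half_pos hg.1) hρ₁) (lt_min (by linarith) hrminpos)
  have hρ'ρ₁ : ρ' ≤ ρ₁ := le_trans (min_le_left _ _) (min_le_right _ _)
  have hρ'ρ2 : ρ' ≤ ρ / 2 := le_trans (min_le_left _ _) (min_le_left _ _)
  have hρ'dmin : ρ' ≤ dmin / 3 := le_trans (min_le_right _ _) (min_le_left _ _)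
  have hρ'rmin : ρ' ≤ rmin := le_trans (min_le_right _ _) (min_le_right _ _)
  refine ⟨c₁, ρ', ⟨hρ'pos, hcls₁, hD₁, ?_, ?_⟩, ?_, hρ'ρ2, ?_⟩
  · -- balls inside ball x₀ r₀
    intro σ w hw
    apply hg.2.2.2.1 σ
    rw [mem_closedBall] at hw ⊢
    have h1 := hnest₁ σ
    linarith [dist_triangle w (c₁ σ) (c σ)]
  · -- disjointness
    intro σ τ hd
    have hdist : dmin ≤ dist (c₁ σ) (c₁ τ) := by
      have hune : (fun i : Fin (m+1) => σ i) ≠ (fun i : Fin (m+1) => τ i) := by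
        obtain ⟨j, hj, hne'⟩ := hd
        intro h
        exact hne' (congrFun h ⟨j, hj⟩)
      have := Finset.inf'_le G (Finset.mem_univ
        ((fun i : Fin (m+1) => σ i), (fun i : Fin (m+1) => τ i)))
      rw [hG] at this
      simp only [if_neg hune] at this
      rw [hrest σ, hrest τ] at this
      exact this
    rw [Set.disjoint_left]
    intro w hw1 hw2
    rw [mem_closedBall] at hw1 hw2
    have := dist_triangle (c₁ σ) w (c₁ τ)
    rw [dist_comm (c₁ σ) w] at this
    linarith
  · -- nesting
    intro σ
    have := hnest₁ σ
    linarith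
  · -- separation and merging guarantees
    intro σ τ hd
    constructor
    · obtain ⟨N, hNm, hN⟩ := hSEP σ τ hd
      exact ⟨N, hNm, fun a ha b hb =>
        hN a (closedBall_subset_closedBall hρ'ρ₁ ha) b (closedBall_subset_closedBall hρ'ρ₁ hb)⟩
    · obtain ⟨j, hj, hne'⟩ := hd
      set w : (Fin (m+1) → Bool) × (Fin (m+1) → Bool) :=
        ((fun i : Fin (m+1) => σ i), (fun i : Fin (m+1) => τ i)) with hw
      have hune : w.1 ≠ w.2 := by
        intro h
        exact hne' (congrFun h ⟨j, hj⟩)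
      obtain ⟨N, hNm, hN⟩ := hrf1 w hune
      have hrw : ρ' ≤ rf w := le_trans hρ'rmin (Finset.inf'_le rf (Finset.mem_univ w))
      refine ⟨N, hNm, fun a ha b hb => ?_⟩
      have ha' : a ∈ closedBall (c₁ (extFn w.1)) (rf w) := by
        have : c₁ (extFn w.1) = c₁ σ := hrest σ
        rw [this]
        exact closedBall_subset_closedBall hrw ha
      have hb' : b ∈ closedBall (c₁ (extFn w.2)) (rf w) := by
        have : c₁ (extFn w.2) = c₁ τ := hrest τ
        rw [this]
        exact closedBall_subset_closedBall hrw hb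
      exact hN a ha' b hb'
end stepsec
section limitsec
open Filter Metric Set Topology
variable {X : Type*} [MetricSpace X] [CompactSpace X]
variable {T : X → X} {D : Set X} {x₀ : X} {r₀ δ : ℝ}

lemma construction (hT : Continuous T) (hδ : 0 < δ)
    (hsens : ∀ x : X, ∀ ε : ℝ, 0 < ε → ∃ y, dist y x < ε ∧
      ∀ m : ℕ, ∃ N, m ≤ N ∧ δ < birkhoffAvg T x y N)
    (hmerge : ∀ z₁ ∈ D, ∀ z₂ ∈ D, ∀ ε : ℝ, 0 < ε → ∀ m : ℕ,
      ∃ N, m ≤ N ∧ birkhoffAvg T z₁ z₂ N < ε)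
    (hball : ball x₀ r₀ ⊆ closure D) (hr₀ : 0 < r₀)
    (hx : ∃ xs ∈ D, dist xs x₀ < r₀ / 2) :
    ∃ f : (ℕ → Bool) → X, Continuous f ∧ Function.Injective f ∧
      ∀ σ τ : ℕ → Bool, σ ≠ τ →
        (∀ m : ℕ, ∃ N, m ≤ N ∧ δ / 2 < birkhoffAvg T (f σ) (f τ) N) ∧
        (∀ m : ℕ, ∃ N, m ≤ N ∧ birkhoffAvg T (f σ) (f τ) N < ((m : ℝ) + 1)⁻¹) := by
  classical
  obtain ⟨xs, hxD, hxdist⟩ := hx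
  -- initial configuration
  set s₀ : ((ℕ → Bool) → X) × ℝ := (fun _ => xs, r₀ / 4) with hs₀
  have hGood₀ : GoodCfg D x₀ r₀ 0 s₀.1 s₀.2 := by
    refine ⟨by positivity, fun _ _ _ => rfl, fun _ => hxD, ?_, ?_⟩
    · intro σ w hw
      rw [mem_closedBall] at hw
      rw [mem_ball]
      calc dist w x₀ ≤ dist w xs + dist xs x₀ := dist_triangle _ _ _
        _ < r₀ / 4 + r₀ / 2 := by exact add_lt_add_of_le_of_lt hw hxdist
        _ < r₀ := by linarith
    · rintro σ τ ⟨j, hj, _⟩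
      omega
  -- one-step function via choice
  have key : ∀ (m : ℕ) (s : ((ℕ → Bool) → X) × ℝ), ∃ s' : ((ℕ → Bool) → X) × ℝ,
      GoodCfg D x₀ r₀ m s.1 s.2 →
      (GoodCfg D x₀ r₀ (m+1) s'.1 s'.2 ∧ StepConcl T δ m s.1 s.2 s'.1 s'.2) := by
    intro m s
    by_cases h : GoodCfg D x₀ r₀ m s.1 s.2
    · obtain ⟨c', ρ', h1, h2⟩ := step_lemma hT hδ hsens hmerge hball h
      exact ⟨(c', ρ'), fun _ => ⟨h1, h2⟩⟩
    · exact ⟨s, fun h' => absurd h' h⟩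
  choose Gf hGf using key
  set seq : ℕ → ((ℕ → Bool) → X) × ℝ := fun m => Nat.rec s₀ (fun k prev => Gf k prev) m
    with hseqdef
  have hseqS : ∀ m, seq (m+1) = Gf m (seq m) := fun m => rfl
  have hGood : ∀ m, GoodCfg D x₀ r₀ m (seq m).1 (seq m).2 := by
    intro m
    induction m with
    | zero => exact hGood₀
    | succ k ih => rw [hseqS]; exact (hGf k (seq k) ih).1
  have hstep : ∀ m, StepConcl T δ m (seq m).1 (seq m).2 (seq (m+1)).1 (seq (m+1)).2 := by
    intro m
    rw [hseqS]
    exact (hGf m (seq m) (hGood m)).2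
  set c : ℕ → (ℕ → Bool) → X := fun m => (seq m).1 with hc
  set ρ : ℕ → ℝ := fun m => (seq m).2 with hρ
  have hρpos : ∀ m, 0 < ρ m := fun m => (hGood m).1
  have hρhalf : ∀ m, ρ (m+1) ≤ ρ m / 2 := fun m => (hstep m).2.1
  have hnest : ∀ m σ, dist (c (m+1) σ) (c m σ) + ρ (m+1) ≤ ρ m := fun m => (hstep m).1
  -- ρ tends to 0
  have hρdecay : ∀ m, ρ m ≤ ρ 0 * (1/2)^m := by
    intro m
    induction m with
    | zero => simp
    | succ k ih =>
      calc ρ (k+1) ≤ ρ k / 2 := hρhalf k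
        _ ≤ (ρ 0 * (1/2)^k) / 2 := by linarith
        _ = ρ 0 * (1/2)^(k+1) := by ring
  have hρ0 : Tendsto ρ atTop (𝓝 0) := by
    apply squeeze_zero (fun m => (hρpos m).le) hρdecay
    have := tendsto_pow_atTop_nhds_zero_of_lt_one (by norm_num : (0:ℝ) ≤ 1/2)
      (by norm_num : (1:ℝ)/2 < 1)
    simpa using this.const_mul (ρ 0)
  -- Cauchy
  have hdist : ∀ σ : ℕ → Bool, ∀ m k, m ≤ k → dist (c k σ) (c m σ) ≤ ρ m - ρ k := by
    intro σ m k hmk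
    induction k with
    | zero =>
      have : m = 0 := by omega
      subst this
      simp
    | succ k ih =>
      rcases Nat.lt_or_ge m (k+1) with h | h
      · have hmk' : m ≤ k := by omega
        have h1 := ih hmk'
        have h2 := hnest k σ
        calc dist (c (k+1) σ) (c m σ) ≤ dist (c (k+1) σ) (c k σ) + dist (c k σ) (c m σ) :=
            dist_triangle _ _ _
          _ ≤ (ρ k - ρ (k+1)) + (ρ m - ρ k) := by linarith
          _ = ρ m - ρ (k+1) := by ring
      · have : m = k + 1 := by omega
        subst this
        simp
  have hdist' : ∀ σ : ℕ → Bool, ∀ m k, m ≤ k → dist (c k σ) (c m σ) ≤ ρ m := by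
    intro σ m k h
    have h1 := hdist σ m k h
    have := hρpos k
    linarith
  have hcauchy : ∀ σ : ℕ → Bool, CauchySeq (fun m => c m σ) := by
    intro σ
    apply cauchySeq_of_le_tendsto_0 (b := fun n => 2 * ρ n) _ (by simpa using hρ0.const_mul 2)
    intro n k N hn hk
    calc dist (c n σ) (c k σ) ≤ dist (c n σ) (c N σ) + dist (c k σ) (c N σ) :=
          dist_triangle_right _ _ _
      _ ≤ ρ N + ρ N := add_le_add (hdist' σ N n hn) (hdist' σ N k hk)
      _ = 2 * ρ N := by ring
  have hfex : ∀ σ : ℕ → Bool, ∃ xl : X, Tendsto (fun m => c m σ) atTop (𝓝 xl) :=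
    fun σ => cauchySeq_tendsto_of_complete (hcauchy σ)
  choose f hf using hfex
  -- limit point stays in all balls
  have hfb : ∀ (σ : ℕ → Bool) (m : ℕ), f σ ∈ closedBall (c m σ) (ρ m) := by
    intro σ m
    rw [mem_closedBall]
    have htd : Tendsto (fun k => dist (c k σ) (c m σ)) atTop (𝓝 (dist (f σ) (c m σ))) :=
      (hf σ).dist tendsto_const_nhds
    apply le_of_tendsto htd
    filter_upwards [eventually_ge_atTop m] with k hk
    exact hdist' σ m k hk
  -- injectivity
  have hinj : Function.Injective f := by
    intro σ τ h
    by_contra hne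
    obtain ⟨j, hj⟩ := Function.ne_iff.1 hne
    have hdisj := (hGood (j+1)).2.2.2.2 σ τ ⟨j, by omega, hj⟩
    exact Set.disjoint_left.1 hdisj (hfb σ (j+1)) (h ▸ hfb τ (j+1))
  -- continuity
  have hcont : Continuous f := by
    rw [continuous_iff_continuousAt]
    intro σ
    rw [ContinuousAt, Metric.tendsto_nhds]
    intro ε hε
    obtain ⟨m, hm⟩ := ((tendsto_order.1 hρ0).2 (ε/3) (by positivity)).exists
    have hVj : ∀ j : ℕ, ∀ᶠ τ : ℕ → Bool in 𝓝 σ, τ j = σ j := by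
      intro j
      have ht : Tendsto (fun τ : ℕ → Bool => τ j) (𝓝 σ) (𝓝 (σ j)) :=
        (continuous_apply j).tendsto σ
      have hmem : {b : Bool | b = σ j} ∈ 𝓝 (σ j) :=
        IsOpen.mem_nhds (isOpen_discrete _) rfl
      exact ht hmem
    have hV : ∀ᶠ τ : ℕ → Bool in 𝓝 σ, ∀ j ∈ Finset.range m, τ j = σ j :=
      (Finset.eventually_all (Finset.range m)).2 fun j _ => hVj j
    filter_upwards [hV] with τ hτ
    have hceq : c m τ = c m σ := (hGood m).2.1 τ σ (fun j hj => hτ j (Finset.mem_range.2 hj))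
    have h1 : dist (f τ) (c m τ) ≤ ρ m := mem_closedBall.1 (hfb τ m)
    have h2 : dist (f σ) (c m σ) ≤ ρ m := mem_closedBall.1 (hfb σ m)
    calc dist (f τ) (f σ) ≤ dist (f τ) (c m τ) + dist (f σ) (c m τ) := dist_triangle_right _ _ _
      _ = dist (f τ) (c m τ) + dist (f σ) (c m σ) := by rw [hceq]
      _ ≤ ρ m + ρ m := add_le_add h1 h2
      _ < ε := by linarith
  refine ⟨f, hcont, hinj, ?_⟩
  intro σ τ hne
  obtain ⟨j, hj⟩ := Function.ne_iff.1 hne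
  constructor
  · intro m
    have hd : ∃ i, i < max m j + 1 ∧ σ i ≠ τ i := ⟨j, by omega, hj⟩
    obtain ⟨N, hNm, hN⟩ := ((hstep (max m j)).2.2 σ τ hd).1
    exact ⟨N, le_trans (le_max_left m j) hNm,
      hN (f σ) (hfb σ (max m j + 1)) (f τ) (hfb τ (max m j + 1))⟩
  · intro m
    have hd : ∃ i, i < max m j + 1 ∧ σ i ≠ τ i := ⟨j, by omega, hj⟩
    obtain ⟨N, hNm, hN⟩ := ((hstep (max m j)).2.2 σ τ hd).2
    refine ⟨N, le_trans (le_max_left m j) hNm,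
      lt_of_lt_of_le (hN (f σ) (hfb σ (max m j + 1)) (f τ) (hfb τ (max m j + 1))) ?_⟩
    have hcast : (m:ℝ) + 1 ≤ ((max m j : ℕ) : ℝ) + 1 := by
      have : (m:ℝ) ≤ ((max m j : ℕ) : ℝ) := by exact_mod_cast le_max_left m j
      linarith
    exact inv_anti₀ (by positivity) hcast
end limitsec

open Topology in
set_option maxHeartbeats 1000000 in
/-- If a TDS is mean sensitive and there is a mean proximal pair consisting of a
transitive point `q` and a periodic point `p`, then there are `η > 0` and a set `K`,
a union of countably many Cantor sets, which is a mean Li-Yorke set with modulus `η`;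
in particular `K` is uncountable, so `(X,T)` is mean Li-Yorke chaotic. -/
theorem mean_LiYorke_chaos_of_meanSensitive_of_transitive_periodic_meanProximal
    {X : Type*} [MetricSpace X] [CompactSpace X] (T : X → X) (hT : Continuous T)
    (hsens : MeanSensitive T) (q p : X)
    (hq : Dense (Set.range fun n : ℕ => T^[n] q))
    (hp : ∃ t : ℕ, 1 ≤ t ∧ T^[t] p = p ∧ ∀ i : ℕ, 1 ≤ i → i < t → T^[i] p ≠ p)
    (hqp : MeanProximalPair T q p) :
    ∃ η > (0 : ℝ), ∃ K : Set X,
      (∃ C : ℕ → Set X, (∀ n, IsCantorSet (C n)) ∧ K = ⋃ n, C n) ∧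
      MeanLiYorkeSetMod T η K ∧ ¬ K.Countable := by
  classical
  obtain ⟨δ, hδ, hsensδ⟩ := hsens
  obtain ⟨t, ht1, htp, -⟩ := hp
  -- preprocessed sensitivity
  have hsens' : ∀ x : X, ∀ ε : ℝ, 0 < ε → ∃ y, dist y x < ε ∧
      ∀ m : ℕ, ∃ N, m ≤ N ∧ δ < birkhoffAvg T x y N := by
    intro x ε hε
    obtain ⟨y, hy, hlim⟩ := hsensδ x ε hε
    exact ⟨y, mem_ball.1 hy, freq_of_lt_limsup hlim⟩
  -- preprocessed proximality of (q,p)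
  have hfreqqp : ∀ ε : ℝ, 0 < ε → ∀ m : ℕ, ∃ M, m ≤ M ∧ birkhoffAvg T q p M < ε := by
    intro ε hε m
    have : liminf (birkhoffAvg T q p) atTop < ε := by rw [hqp]; exact hε
    exact freq_of_liminf_lt this m
  -- Baire category: one of the residue-class orbit closures has interior
  have hcover : ⋃ i : Fin t, closure (range fun n : ℕ => T^[t*n + i.val] q) = univ := by
    apply eq_univ_of_univ_subset
    have h1 : range (fun n : ℕ => T^[n] q) ⊆
        ⋃ i : Fin t, closure (range fun n : ℕ => T^[t*n + i.val] q) := by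
      rintro - ⟨n, rfl⟩
      have htpos : 0 < t := ht1
      apply mem_iUnion.2
      refine ⟨⟨n % t, Nat.mod_lt n htpos⟩, ?_⟩
      apply subset_closure
      refine ⟨n / t, ?_⟩
      show T^[t * (n / t) + n % t] q = T^[n] q
      rw [Nat.div_add_mod]
    have h2 : closure (range fun n : ℕ => T^[n] q) = univ := hq.closure_eq
    calc univ = closure (range fun n : ℕ => T^[n] q) := h2.symm
      _ ⊆ closure (⋃ i : Fin t, closure (range fun n : ℕ => T^[t*n + i.val] q)) :=
          closure_mono h1
      _ = ⋃ i : Fin t, closure (range fun n : ℕ => T^[t*n + i.val] q) :=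
          IsClosed.closure_eq (isClosed_iUnion_of_finite fun i => isClosed_closure)
  have : Nonempty X := ⟨q⟩
  obtain ⟨i, hi⟩ := nonempty_interior_of_iUnion_of_closed
    (f := fun i : Fin t => closure (range fun n : ℕ => T^[t*n + i.val] q))
    (fun i => isClosed_closure) hcover
  obtain ⟨x₀, hx₀⟩ := hi
  obtain ⟨r₀, hr₀, hballint⟩ := Metric.isOpen_iff.1 isOpen_interior x₀ hx₀
  set D : Set X := range (fun n : ℕ => T^[t*n + i.val] q) with hD
  have hball : ball x₀ r₀ ⊆ closure D :=
    fun z hz => interior_subset (hballint hz)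
  -- merge property within D
  have hmerge : ∀ z₁ ∈ D, ∀ z₂ ∈ D, ∀ ε : ℝ, 0 < ε → ∀ m : ℕ,
      ∃ N, m ≤ N ∧ birkhoffAvg T z₁ z₂ N < ε := by
    rintro - ⟨n₁, rfl⟩ - ⟨n₂, rfl⟩ ε hε m
    have hmod : (t*n₁ + i.val) % t = (t*n₂ + i.val) % t := by
      simp [Nat.mul_add_mod]
    exact merge_lemma ht1 htp hfreqqp hmod hε m
  -- a point of D near the centre
  have hx : ∃ xs ∈ D, dist xs x₀ < r₀ / 2 := by
    have hx₀cl : x₀ ∈ closure D := hball (mem_ball_self hr₀)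
    obtain ⟨xs, hxs, hdist⟩ := Metric.mem_closure_iff.1 hx₀cl (r₀/2) (by positivity)
    exact ⟨xs, hxs, by rw [dist_comm]; exact hdist⟩
  -- the Cantor scheme
  obtain ⟨f, hcont, hinj, hpairs⟩ :=
    construction hT hδ hsens' hmerge hball hr₀ hx
  refine ⟨δ/2, by positivity, range f, ⟨fun _ => range f, fun n => ?_, (Set.iUnion_const _).symm⟩, ?_, ?_⟩
  · -- Cantor set
    have hcomp : IsCompact (range f) := isCompact_range hcont
    refine ⟨⟨f (fun _ => false), mem_range_self _⟩, hcomp, ⟨hcomp.isClosed, ?_⟩, ?_⟩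
    · -- perfect
      rintro - ⟨σ, rfl⟩
      rw [accPt_iff_nhds]
      intro U hU
      have htend : Tendsto (fun k : ℕ => Function.update σ k (!σ k)) atTop (𝓝 σ) := by
        rw [tendsto_pi_nhds]
        intro j
        apply Tendsto.congr' (f₁ := fun _ => σ j)
        · filter_upwards [eventually_ge_atTop (j+1)] with k hk
          rw [Function.update_of_ne (by omega) _ σ]
        · exact tendsto_const_nhds
      have := ((hcont.tendsto σ).comp htend).eventually_mem hU
      obtain ⟨k, hk⟩ := this.exists
      refine ⟨f (Function.update σ k (!σ k)), ⟨hk, mem_range_self _⟩, ?_⟩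
      intro heq
      have := hinj heq
      have := congrFun this k
      simp at this
    · -- totally disconnected
      have hemb := (hcont.isClosedEmbedding hinj).toIsEmbedding
      exact hemb.isTotallyDisconnected_range.2 inferInstance
  · -- mean Li-Yorke set
    rintro - ⟨σ, rfl⟩ - ⟨τ, rfl⟩ hne
    have hστ : σ ≠ τ := fun h => hne (by rw [h])
    obtain ⟨hsep, hmer⟩ := hpairs σ τ hστ
    constructor
    · exact liminf_eq_zero_of_freq hmer
    · exact le_limsup_of_freq fun m => (hsep m).imp fun N hN => ⟨hN.1, hN.2.le⟩
  · -- not countable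
    intro hc
    have := hc.to_subtype
    have hcount : Countable (ℕ → Bool) := by
      have : Function.Injective (fun σ : ℕ → Bool => (⟨f σ, mem_range_self σ⟩ : range f)) := by
        intro σ τ h
        apply hinj
        exact congrArg Subtype.val h
      exact this.countable
    exact uncountable_seq hcount
end

section
/- Let (X,T) be a TDS and let A be a Borel subset of X such that every pair (x,y) ∈ A × A is mean proximal. Then for every non-atomic T-invariant Borel probability measure μ on X, one has μ(A) = 0. -/
open Filter Metric Set MeasureTheory

section Aux

lemma liminf_le_liminf_of_tendsto_sub' {u v : ℕ → ℝ} {c : ℝ}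
    (hu0 : ∀ n, 0 ≤ u n) (huc : ∀ n, u n ≤ c) (hv0 : ∀ n, 0 ≤ v n)
    (hw : Tendsto (fun n => v n - u n) atTop (nhds 0)) :
    liminf v atTop ≤ liminf u atTop := by
  refine le_of_forall_pos_le_add fun ε hε => ?_
  have h : ∀ᶠ n in atTop, v n ≤ u n + ε :=
    (hw.eventually_lt_const hε).mono fun n h => by linarith
  have hvbd : IsBoundedUnder (· ≥ ·) atTop v := isBoundedUnder_of ⟨0, hv0⟩
  have hucob : IsCoboundedUnder (· ≥ ·) atTop fun n => u n + ε :=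
    (isBoundedUnder_of ⟨c + ε, fun n => by linarith [huc n]⟩).isCoboundedUnder_ge
  calc liminf v atTop ≤ liminf (fun n => u n + ε) atTop := liminf_le_liminf h hvbd hucob
    _ = liminf u atTop + ε :=
      liminf_add_const atTop u ε ((isBoundedUnder_of ⟨c, huc⟩).isCoboundedUnder_ge)
        (isBoundedUnder_of ⟨0, hu0⟩)

lemma liminf_eq_liminf_of_tendsto_sub' {u v : ℕ → ℝ} {c : ℝ}
    (hu0 : ∀ n, 0 ≤ u n) (huc : ∀ n, u n ≤ c) (hv0 : ∀ n, 0 ≤ v n) (hvc : ∀ n, v n ≤ c)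
    (hw : Tendsto (fun n => v n - u n) atTop (nhds 0)) :
    liminf v atTop = liminf u atTop :=
  le_antisymm (liminf_le_liminf_of_tendsto_sub' hu0 huc hv0 hw)
    (liminf_le_liminf_of_tendsto_sub' hv0 hvc hu0 (by simpa using hw.neg))

/-- Garsia-style maximal ergodic argument: if a.e. point has some positive Birkhoff sum
of `g`, then `∫ g ≥ 0`. -/
lemma integral_nonneg_of_exists_birkhoffSum_pos
    {Z : Type*} [MetricSpace Z] [CompactSpace Z] [MeasurableSpace Z] [BorelSpace Z]
    (S : Z → Z) (hS : Continuous S)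
    (ν : MeasureTheory.Measure Z) [IsFiniteMeasure ν] (hpres : MeasurePreserving S ν ν)
    (g : Z → ℝ) (hg : Continuous g)
    (hpos : ∀ᵐ z ∂ν, ∃ n : ℕ, 0 < birkhoffSum S g (n + 1) z) :
    0 ≤ ∫ z, g z ∂ν := by
  have hint : ∀ (h : Z → ℝ), Continuous h → Integrable h ν := fun h hh => by
    rw [← integrableOn_univ]
    exact hh.continuousOn.integrableOn_compact isCompact_univ
  set M : ℕ → Z → ℝ := fun n =>
    Nat.rec (birkhoffSum S g 1) (fun n Mn z => max (Mn z) (birkhoffSum S g (n + 2) z)) n with hM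
  have hM0 : M 0 = birkhoffSum S g 1 := rfl
  have hMsucc : ∀ n z, M (n + 1) z = max (M n z) (birkhoffSum S g (n + 2) z) := fun n z => rfl
  have hMcont : ∀ n, Continuous (M n) := by
    intro n
    induction n with
    | zero => exact continuous_finset_sum _ fun k _ => hg.comp (hS.iterate k)
    | succ n ih =>
      exact ih.max (continuous_finset_sum _ fun k _ => hg.comp (hS.iterate k))
  have hMmono : ∀ n z, M n z ≤ M (n + 1) z := fun n z => le_max_left _ _
  have hMle : ∀ n k, k ≤ n → ∀ z, birkhoffSum S g (k + 1) z ≤ M n z := by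
    intro n
    induction n with
    | zero => intro k hk z; interval_cases k; simp [hM0]
    | succ n ih =>
      intro k hk z
      rcases Nat.lt_succ_iff_lt_or_eq.mp (Nat.lt_succ_of_le hk) with h | h
      · exact le_trans (ih k (Nat.lt_succ_iff.mp h) z) (hMmono n z)
      · subst h; rw [hMsucc]; exact le_max_right _ _
  have hkey : ∀ n z, M n z ≤ g z + max (M n (S z)) 0 := by
    intro n
    induction n with
    | zero =>
      intro z
      have : M 0 z = g z := by simp [hM0, birkhoffSum_one]
      rw [this]
      nlinarith [le_max_right (M 0 (S z)) (0:ℝ)]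
    | succ n ih =>
      intro z
      rw [hMsucc]
      apply max_le
      · exact le_trans (ih z) (by gcongr; exact hMmono n (S z))
      · rw [birkhoffSum_succ' S g (n + 1) z]
        have h1 : birkhoffSum S g (n + 1) (S z) ≤ M n (S z) := hMle n n le_rfl (S z)
        have h2 : M n (S z) ≤ max (M (n + 1) (S z)) 0 :=
          le_trans (hMmono n (S z)) (le_max_left _ _)
        linarith
  set A : ℕ → Set Z := fun n => {z | 0 < M n z} with hA
  have hAmeas : ∀ n, MeasurableSet (A n) :=
    fun n => measurableSet_lt measurable_const (hMcont n).measurable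
  have hAmono : Monotone A := by
    apply monotone_nat_of_le_succ
    intro n z hz
    exact lt_of_lt_of_le hz (hMmono n z)
  have hstep : ∀ n, 0 ≤ ∫ z in A n, g z ∂ν := by
    intro n
    have hMp : Continuous fun z => max (M n z) 0 := (hMcont n).max continuous_const
    have hMpS : Continuous fun z => max (M n (S z)) 0 := hMp.comp hS
    have hcsub : Continuous fun z => M n z - max (M n (S z)) 0 := (hMcont n).sub hMpS
    have h1 : ∫ z in A n, (M n z - max (M n (S z)) 0) ∂ν ≤ ∫ z in A n, g z ∂ν := by
      apply setIntegral_mono_on ((hint _ hcsub).integrableOn)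
        ((hint _ hg).integrableOn) (hAmeas n)
      intro z _
      have := hkey n z
      linarith
    have h2 : ∫ z in A n, (M n z - max (M n (S z)) 0) ∂ν
        = ∫ z in A n, M n z ∂ν - ∫ z in A n, max (M n (S z)) 0 ∂ν :=
      integral_sub ((hint _ (hMcont n)).integrableOn) ((hint _ hMpS).integrableOn)
    have h3 : ∫ z in A n, M n z ∂ν = ∫ z, max (M n z) 0 ∂ν := by
      rw [← integral_add_compl (hAmeas n) (hint _ hMp)]
      have e1 : ∫ z in A n, M n z ∂ν = ∫ z in A n, max (M n z) 0 ∂ν := by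
        apply setIntegral_congr_fun (hAmeas n)
        intro z hz
        exact (max_eq_left (le_of_lt hz)).symm
      have e2 : ∫ z in (A n)ᶜ, max (M n z) 0 ∂ν = 0 := by
        rw [setIntegral_congr_fun (hAmeas n).compl (g := fun _ => (0:ℝ))]
        · exact integral_zero _ _
        · intro z hz
          simp only [hA, mem_compl_iff, mem_setOf_eq, not_lt] at hz
          exact max_eq_right hz
      rw [e2, add_zero, e1]
    have h4 : ∫ z in A n, max (M n (S z)) 0 ∂ν ≤ ∫ z, max (M n (S z)) 0 ∂ν :=
      setIntegral_le_integral (hint _ hMpS)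
        (Filter.Eventually.of_forall fun z => le_max_right _ _)
    have h5 : ∫ z, max (M n (S z)) 0 ∂ν = ∫ z, max (M n z) 0 ∂ν := by
      have hm : AEStronglyMeasurable (fun z => max (M n z) 0) (Measure.map S ν) := by
        rw [hpres.map_eq]; exact hMp.measurable.aestronglyMeasurable
      have := integral_map (μ := ν) hS.measurable.aemeasurable hm
      rw [hpres.map_eq] at this
      exact this.symm
    have : 0 ≤ ∫ z in A n, M n z ∂ν - ∫ z in A n, max (M n (S z)) 0 ∂ν := by
      rw [h3]; linarith
    linarith [h1, h2.symm ▸ this]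
  have hmem : ∀ᵐ z ∂ν, z ∈ ⋃ n, A n := by
    refine hpos.mono fun z hz => ?_
    obtain ⟨n, hn⟩ := hz
    exact mem_iUnion.2 ⟨n, lt_of_lt_of_le hn (hMle n n le_rfl z)⟩
  have hAcover : ν (⋃ n, A n)ᶜ = 0 := by
    rw [ae_iff] at hmem
    convert hmem using 2
    rfl
  have hrestr : ν.restrict (⋃ n, A n) = ν := by
    rw [Measure.restrict_congr_set (ae_eq_univ.2 hAcover), Measure.restrict_univ]
  have htend : Tendsto (fun n => ∫ z in A n, g z ∂ν) atTop (nhds (∫ z in ⋃ n, A n, g z ∂ν)) :=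
    tendsto_setIntegral_of_monotone hAmeas hAmono ((hint _ hg).integrableOn)
  have : 0 ≤ ∫ z in ⋃ n, A n, g z ∂ν := ge_of_tendsto' htend hstep
  rwa [show (∫ z in ⋃ n, A n, g z ∂ν) = ∫ z, g z ∂ν by rw [hrestr]] at this

end Aux

/-- If `A` is a Borel set such that every pair of points of `A` is mean proximal,
then `A` is null for every non-atomic invariant Borel probability measure. -/
theorem measure_zero_of_meanProximal_set
    {X : Type*} [MetricSpace X] [CompactSpace X] [MeasurableSpace X] [BorelSpace X]
    (T : X → X) (hT : Continuous T)
    (A : Set X) (hA : MeasurableSet A)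
    (hmp : ∀ x ∈ A, ∀ y ∈ A, MeanProximalPair T x y)
    (μ : Measure X) [IsProbabilityMeasure μ]
    (hinv : ∀ B : Set X, MeasurableSet B → μ (T ⁻¹' B) = μ B)
    (hna : ∀ x : X, μ {x} = 0) :
    μ A = 0 := by
  -- nonemptiness and a bound on distances
  have hne : Nonempty X := by
    by_contra h
    have h1 : μ univ = 1 := measure_univ
    rw [univ_eq_empty_iff.mpr (not_nonempty_iff.mp h)] at h1
    simp at h1
  obtain ⟨C, hC⟩ : ∃ C, ∀ x y : X, dist x y ≤ C := by
    obtain ⟨C, hC⟩ := Metric.isBounded_iff.mp (isCompact_univ (X := X)).isBounded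
    exact ⟨C, fun x y => hC (mem_univ x) (mem_univ y)⟩
  have hC0 : 0 ≤ C := le_trans dist_nonneg (hC (Classical.arbitrary X) (Classical.arbitrary X))
  -- the product system
  set S : X × X → X × X := Prod.map T T with hSdef
  have hScont : Continuous S := hT.prodMap hT
  set F : X × X → ℝ := fun z => dist z.1 z.2 with hFdef
  have hFcont : Continuous F := continuous_fst.dist continuous_snd
  have hF0 : ∀ z, 0 ≤ F z := fun z => dist_nonneg
  have hFC : ∀ z, F z ≤ C := fun z => hC _ _
  -- Birkhoff averages on the product
  set avg : ℕ → X × X → ℝ := fun N z => birkhoffSum S F N z / N with havg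
  have havg0 : ∀ N z, 0 ≤ avg N z := fun N z =>
    div_nonneg (Finset.sum_nonneg fun k _ => hF0 _) (Nat.cast_nonneg N)
  have havgC : ∀ N z, avg N z ≤ C := by
    intro N z
    rcases Nat.eq_zero_or_pos N with rfl | hN
    · simpa [havg, birkhoffSum] using hC0
    · rw [havg, div_le_iff₀ (by exact_mod_cast hN)]
      calc birkhoffSum S F N z ≤ ∑ _k ∈ Finset.range N, C :=
            Finset.sum_le_sum fun k _ => hFC _
        _ = C * N := by simp [mul_comm]
  -- continuity and measurability
  have havgcont : ∀ N, Continuous (avg N) := fun N =>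
    (continuous_finset_sum _ fun k _ => hFcont.comp (hScont.iterate k)).div_const _
  set φ : X × X → ℝ := fun z => liminf (fun N => avg N z) atTop with hφ
  have hφmeas : Measurable φ := Measurable.liminf fun N => (havgcont N).measurable
  -- invariance of the liminf
  have hφS : ∀ z, φ (S z) = φ z := by
    intro z
    refine liminf_eq_liminf_of_tendsto_sub' (c := C) (fun N => havg0 N z) (fun N => havgC N z)
      (fun N => havg0 N (S z)) (fun N => havgC N (S z)) ?_
    have heq : ∀ N : ℕ, avg N (S z) - avg N z = (F (S^[N] z) - F z) / N := by
      intro N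
      rw [havg]
      dsimp only
      rw [div_sub_div_same, birkhoffSum_apply_sub_birkhoffSum]
    rw [show (fun N => avg N (S z) - avg N z) = fun N : ℕ => (F (S^[N] z) - F z) / N
      from funext heq]
    apply squeeze_zero_norm (a := fun N : ℕ => 2 * C / N)
    · intro N
      rw [Real.norm_eq_abs, abs_div, Nat.abs_cast]
      have hnum : |F (S^[N] z) - F z| ≤ 2 * C := by
        rw [abs_le]
        constructor <;> nlinarith [hF0 (S^[N] z), hFC (S^[N] z), hF0 z, hFC z]
      rcases Nat.eq_zero_or_pos N with rfl | hN
      · simp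
      · gcongr
    · exact tendsto_const_div_atTop_nhds_zero_nat (2 * C)
  -- the invariant set E
  set E : Set (X × X) := φ ⁻¹' {0} with hE
  have hEmeas : MeasurableSet E := hφmeas (measurableSet_singleton 0)
  have hSE : S ⁻¹' E = E := by
    ext z
    simp only [hE, mem_preimage, mem_singleton_iff, hφS z]
  -- measures
  have hTpres : MeasurePreserving T μ μ :=
    ⟨hT.measurable, Measure.ext fun B hB => by
      rw [Measure.map_apply hT.measurable hB, hinv B hB]⟩
  set μ2 : Measure (X × X) := μ.prod μ with hμ2
  have hSpres2 : MeasurePreserving S μ2 μ2 := hTpres.prod hTpres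
  set ν : Measure (X × X) := μ2.restrict E with hν
  have hpresν : MeasurePreserving S ν ν := by
    refine ⟨hScont.measurable, ?_⟩
    ext B hB
    rw [Measure.map_apply hScont.measurable hB, hν, Measure.restrict_apply hB,
      Measure.restrict_apply (hScont.measurable hB),
      show S ⁻¹' B ∩ E = S ⁻¹' (B ∩ E) by rw [preimage_inter, hSE],
      hSpres2.measure_preimage (hB.inter hEmeas).nullMeasurableSet]
  have hiF : Integrable F ν := by
    rw [← integrableOn_univ]
    exact hFcont.continuousOn.integrableOn_compact isCompact_univ
  -- the key estimate
  have key : ∀ ε : ℝ, 0 < ε → ∫ z, F z ∂ν ≤ 0 + ε := by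
    intro ε hε
    have hpos : ∀ᵐ z ∂ν, ∃ n : ℕ, 0 < birkhoffSum S (fun z => ε - F z) (n + 1) z := by
      apply ae_restrict_of_forall_mem hEmeas
      intro z hz
      have hz0 : φ z = 0 := hz
      have hlt : liminf (fun N => avg N z) atTop < ε := by
        rw [show liminf (fun N => avg N z) atTop = φ z from rfl, hz0]; exact hε
      have hfreq : ∃ᶠ N in atTop, avg N z < ε :=
        frequently_lt_of_liminf_lt
          ((isBoundedUnder_of ⟨C, fun N => havgC N z⟩).isCoboundedUnder_ge) hlt
      obtain ⟨N, hN2, hN1⟩ := (hfreq.and_eventually (eventually_ge_atTop 1)).exists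
      obtain ⟨n, rfl⟩ : ∃ n, N = n + 1 := ⟨N - 1, by omega⟩
      refine ⟨n, ?_⟩
      have hsum : birkhoffSum S (fun z => ε - F z) (n + 1) z
          = (n + 1 : ℕ) * ε - birkhoffSum S F (n + 1) z := by
        simp [birkhoffSum, Finset.sum_sub_distrib, mul_comm]
      rw [hsum, sub_pos]
      have hpn : (0:ℝ) < (n + 1 : ℕ) := by positivity
      rw [havg, div_lt_iff₀ hpn] at hN2
      linarith
    have h0 := integral_nonneg_of_exists_birkhoffSum_pos S hScont ν hpresν
      (fun z => ε - F z) (continuous_const.sub hFcont) hpos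
    rw [integral_sub (integrable_const ε) hiF, integral_const, smul_eq_mul] at h0
    have h1 : ν univ ≤ 1 := by
      rw [hν, Measure.restrict_apply_univ]
      exact prob_le_one
    have h2 : (ν univ).toReal ≤ 1 := by
      simpa using ENNReal.toReal_mono ENNReal.one_ne_top h1
    have h3 : ν.real univ * ε ≤ 1 * ε := mul_le_mul_of_nonneg_right h2 hε.le
    linarith
  have hFint0 : ∫ z, F z ∂ν = 0 :=
    le_antisymm (by simpa using le_of_forall_pos_le_add key)
      (integral_nonneg (fun z => hF0 z))
  have hae : F =ᵐ[ν] 0 := (integral_eq_zero_iff_of_nonneg hF0 hiF).mp hFint0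
  -- the set where F ≠ 0 inside E is μ2-null
  have hFne : μ2 ({z : X × X | F z ≠ 0} ∩ E) = 0 := by
    have h := ae_iff.mp hae
    rw [hν, Measure.restrict_apply (by
      exact (hFcont.measurable (measurableSet_singleton 0)).compl)] at h
    convert h using 2
    rfl
  -- the diagonal is μ2-null
  have hdiag : μ2 {z : X × X | z.1 = z.2} = 0 := by
    have hdm : MeasurableSet {z : X × X | z.1 = z.2} :=
      (isClosed_eq continuous_fst continuous_snd).measurableSet
    rw [hμ2, Measure.prod_apply hdm]
    have hp : ∀ x : X, (Prod.mk x ⁻¹' {z : X × X | z.1 = z.2}) = {x} := by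
      intro x; ext y; simp [eq_comm]
    simp only [hp, hna]
    simp
  -- A × A is contained in E
  have hAE : A ×ˢ A ⊆ E := by
    rintro ⟨x, y⟩ ⟨hx, hy⟩
    have hm := hmp x hx y hy
    have : φ (x, y) = liminf (birkhoffAvg T x y) atTop := by
      apply congrArg (liminf · atTop)
      funext N
      simp [havg, birkhoffAvg, birkhoffSum, hSdef, hFdef, Prod.map_iterate]
    simpa [hE, this, MeanProximalPair] using hm
  -- conclude
  have hsub : A ×ˢ A ⊆ ({z : X × X | F z ≠ 0} ∩ E) ∪ {z : X × X | z.1 = z.2} := by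
    rintro ⟨x, y⟩ hxy
    by_cases hd : x = y
    · exact Or.inr hd
    · exact Or.inl ⟨by simpa [hFdef] using dist_ne_zero.mpr hd, hAE hxy⟩
  have hAA : μ2 (A ×ˢ A) = 0 := by
    apply le_antisymm _ zero_le
    calc μ2 (A ×ˢ A) ≤ μ2 (({z : X × X | F z ≠ 0} ∩ E) ∪ {z : X × X | z.1 = z.2}) :=
          measure_mono hsub
      _ ≤ μ2 ({z : X × X | F z ≠ 0} ∩ E) + μ2 {z : X × X | z.1 = z.2} := measure_union_le _ _
      _ = 0 := by rw [hFne, hdiag, add_zero]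
  rw [hμ2, Measure.prod_prod] at hAA
  exact or_self_iff.mp (mul_eq_zero.mp hAA)
end
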